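/- arXiv:2008.05866 — 2 statements merged into one kernel-verified Lean document; each statement's English description precedes it below -/
import Mathlib

section
/- Let S be an η-sparse family of dyadic cubes, σ and w weights with σ_{Q'} ≥ 1 for all Q' ∈ S, and 1 < p < ∞. Let ψ : [1,∞) → (0,∞) be increasing with ∫_1^∞ (1/ψ(t)) dt/t < ∞, and set [w,σ]_ν = sup_{Q'} w_{Q'} σ_{Q'}^{p-1} ψ(σ_{Q'}), assumed finite. Then for p ≥ 2 and any Q ∈ S: ∑_{Q' ∈ S, Q' ⊆ Q, σ_{Q'} > σ_Q^{1/2}} σ_{Q'} w(Q') ≤ C [w,σ]_ν^{1/(p-1)} ψ(σ_Q^{1/2})^{-1/(p-1)} (w_Q)^{1−1/(p-1)} |Q|, with C depending only on η, p, n. -/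
open MeasureTheory Set
open scoped ENNReal

noncomputable section
attribute [local instance] Classical.propDecidable

def dyadicCube (n : ℕ) (k : ℤ) (m : Fin n → ℤ) : Set (Fin n → ℝ) :=
  {x | ∀ i, (m i : ℝ) * (2:ℝ) ^ k ≤ x i ∧ x i < ((m i : ℝ) + 1) * (2:ℝ) ^ k}

def IsDyadicCube {n : ℕ} (Q : Set (Fin n → ℝ)) : Prop := ∃ k m, Q = dyadicCube n k m

def IsCube {n : ℕ} (Q : Set (Fin n → ℝ)) : Prop :=
  ∃ (a : Fin n → ℝ) (h : ℝ), 0 < h ∧ Q = {x | ∀ i, a i ≤ x i ∧ x i < a i + h}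

def IsSparse {n : ℕ} (η : ℝ≥0∞) (S : Set (Set (Fin n → ℝ))) : Prop :=
  (∀ Q ∈ S, IsDyadicCube Q) ∧
  ∃ E : Set (Fin n → ℝ) → Set (Fin n → ℝ),
    (∀ Q ∈ S, E Q ⊆ Q ∧ MeasurableSet (E Q) ∧ η * volume Q ≤ volume (E Q)) ∧
    S.PairwiseDisjoint E

def mass {n : ℕ} (w : (Fin n → ℝ) → ℝ≥0∞) (Q : Set (Fin n → ℝ)) : ℝ≥0∞ := ∫⁻ x in Q, w x

def avg {n : ℕ} (w : (Fin n → ℝ) → ℝ≥0∞) (Q : Set (Fin n → ℝ)) : ℝ≥0∞ := mass w Q / volume Q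

def maximalOp {n : ℕ} (f : (Fin n → ℝ) → ℝ≥0∞) (x : Fin n → ℝ) : ℝ≥0∞ :=
  ⨆ (Q : Set (Fin n → ℝ)) (_ : IsCube Q) (_ : x ∈ Q), avg f Q

-- 1D nesting
lemma ico_dyadic_nested {k k' : ℤ} (hkk : k ≤ k') {m m' : ℤ} {x : ℝ}
    (hx1 : (m:ℝ) * (2:ℝ)^k ≤ x) (hx2 : x < ((m:ℝ)+1) * (2:ℝ)^k)
    (hy1 : (m':ℝ) * (2:ℝ)^k' ≤ x) (hy2 : x < ((m':ℝ)+1) * (2:ℝ)^k') :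
    ∀ y : ℝ, (m:ℝ) * (2:ℝ)^k ≤ y → y < ((m:ℝ)+1) * (2:ℝ)^k →
      ((m':ℝ) * (2:ℝ)^k' ≤ y ∧ y < ((m':ℝ)+1) * (2:ℝ)^k') := by
  set e : ℕ := (k' - k).toNat with he
  have hke : k' = k + (e : ℤ) := by
    rw [he, Int.toNat_of_nonneg (by omega)]; omega
  have h2k : (0:ℝ) < (2:ℝ)^k := by positivity
  have hpow : (2:ℝ)^k' = (2:ℝ)^k * (2:ℝ)^e := by
    rw [hke, zpow_add₀ (by norm_num : (2:ℝ) ≠ 0), zpow_natCast]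
  have h1 : m' * 2^e ≤ m := by
    have key : ((m':ℝ) * (2:ℝ)^e) < (m:ℝ) + 1 := by
      have h := lt_of_le_of_lt hy1 hx2
      rw [hpow] at h
      have h' : ((m':ℝ) * (2:ℝ)^e) * (2:ℝ)^k < ((m:ℝ) + 1) * (2:ℝ)^k := by ring_nf at h ⊢; linarith
      exact lt_of_mul_lt_mul_right h' h2k.le
    have : ((m' * 2^e : ℤ) : ℝ) < ((m : ℤ) : ℝ) + 1 := by push_cast; exact key
    exact_mod_cast Int.lt_add_one_iff.mp (by exact_mod_cast this)
  have h2 : m + 1 ≤ (m' + 1) * 2^e := by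
    have key : (m:ℝ) < ((m':ℝ) + 1) * (2:ℝ)^e := by
      have h := lt_of_le_of_lt hx1 hy2
      rw [hpow] at h
      have h' : (m:ℝ) * (2:ℝ)^k < (((m':ℝ) + 1) * (2:ℝ)^e) * (2:ℝ)^k := by ring_nf at h ⊢; linarith
      exact lt_of_mul_lt_mul_right h' h2k.le
    have : ((m : ℤ) : ℝ) < (((m' + 1) * 2^e : ℤ) : ℝ) := by push_cast; exact key
    exact_mod_cast Int.add_one_le_iff.mpr (by exact_mod_cast this)
  have h1r : (m':ℝ) * (2:ℝ)^e ≤ (m:ℝ) := by exact_mod_cast h1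
  have h2r : (m:ℝ) + 1 ≤ ((m':ℝ) + 1) * (2:ℝ)^e := by exact_mod_cast h2
  intro y hy1' hy2'
  constructor
  · calc (m':ℝ) * (2:ℝ)^k' = ((m':ℝ) * (2:ℝ)^e) * (2:ℝ)^k := by rw [hpow]; ring
      _ ≤ (m:ℝ) * (2:ℝ)^k := by nlinarith
      _ ≤ y := hy1'
  · have hle : ((m:ℝ)+1) * (2:ℝ)^k ≤ ((m':ℝ)+1) * (2:ℝ)^k' := by
      rw [hpow]; nlinarith
    exact lt_of_lt_of_le hy2' hle

lemma dyadic_subset_of_le {n : ℕ} {k k' : ℤ} (hkk : k ≤ k') {m : Fin n → ℤ} {m' : Fin n → ℤ}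
    {x : Fin n → ℝ} (hx : x ∈ dyadicCube n k m) (hx' : x ∈ dyadicCube n k' m') :
    dyadicCube n k m ⊆ dyadicCube n k' m' := by
  intro y hy i
  exact ico_dyadic_nested hkk (hx i).1 (hx i).2 (hx' i).1 (hx' i).2 (y i) (hy i).1 (hy i).2

lemma dyadic_corner_mem {n : ℕ} (k : ℤ) (m : Fin n → ℤ) :
    (fun i => (m i : ℝ) * (2:ℝ)^k) ∈ dyadicCube n k m := by
  intro i
  refine ⟨le_refl _, ?_⟩
  show (m i : ℝ) * (2:ℝ)^k < ((m i : ℝ) + 1) * (2:ℝ)^k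
  have : (0:ℝ) < (2:ℝ)^k := by positivity
  nlinarith

lemma dyadic_nonempty {n : ℕ} {Q : Set (Fin n → ℝ)} (hQ : IsDyadicCube Q) : Q.Nonempty := by
  obtain ⟨k, m, rfl⟩ := hQ
  exact ⟨_, dyadic_corner_mem k m⟩

lemma dyadic_nested_or_disjoint {n : ℕ} {Q1 Q2 : Set (Fin n → ℝ)}
    (h1 : IsDyadicCube Q1) (h2 : IsDyadicCube Q2) (h : ¬ Disjoint Q1 Q2) :
    Q1 ⊆ Q2 ∨ Q2 ⊆ Q1 := by
  obtain ⟨k1, m1, rfl⟩ := h1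
  obtain ⟨k2, m2, rfl⟩ := h2
  obtain ⟨x, hx1, hx2⟩ := Set.not_disjoint_iff.mp h
  rcases le_total k1 k2 with hk | hk
  · exact Or.inl (dyadic_subset_of_le hk hx1 hx2)
  · exact Or.inr (dyadic_subset_of_le hk hx2 hx1)

lemma dyadicCube_eq_pi (n : ℕ) (k : ℤ) (m : Fin n → ℤ) :
    dyadicCube n k m = Set.univ.pi (fun i => Set.Ico ((m i : ℝ) * (2:ℝ)^k) (((m i : ℝ)+1) * (2:ℝ)^k)) := by
  ext x
  simp [dyadicCube, Set.mem_pi, Set.mem_Ico]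

lemma dyadic_measurable {n : ℕ} {Q : Set (Fin n → ℝ)} (hQ : IsDyadicCube Q) : MeasurableSet Q := by
  obtain ⟨k, m, rfl⟩ := hQ
  rw [dyadicCube_eq_pi]
  exact MeasurableSet.univ_pi (fun i => measurableSet_Ico)

lemma dyadic_volume (n : ℕ) (k : ℤ) (m : Fin n → ℤ) :
    volume (dyadicCube n k m) = (ENNReal.ofReal ((2:ℝ)^k))^n := by
  rw [dyadicCube_eq_pi, volume_pi_pi]
  have : ∀ i : Fin n, volume (Set.Ico ((m i : ℝ) * (2:ℝ)^k) (((m i : ℝ)+1) * (2:ℝ)^k))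
      = ENNReal.ofReal ((2:ℝ)^k) := by
    intro i; rw [Real.volume_Ico]; ring_nf
  simp only [this, Finset.prod_const, Finset.card_univ, Fintype.card_fin]

lemma dyadic_volume_pos {n : ℕ} {Q : Set (Fin n → ℝ)} (hQ : IsDyadicCube Q) :
    0 < volume Q := by
  obtain ⟨k, m, rfl⟩ := hQ
  rw [dyadic_volume]
  exact ENNReal.pow_pos (ENNReal.ofReal_pos.mpr (by positivity)) n

lemma dyadic_volume_lt_top {n : ℕ} {Q : Set (Fin n → ℝ)} (hQ : IsDyadicCube Q) :
    volume Q < ∞ := by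
  obtain ⟨k, m, rfl⟩ := hQ
  rw [dyadic_volume]
  exact ENNReal.pow_lt_top ENNReal.ofReal_lt_top

-- same scale intersecting: equal
lemma dyadic_same_scale_eq {n : ℕ} {k : ℤ} {m m' : Fin n → ℤ}
    (h : ¬ Disjoint (dyadicCube n k m) (dyadicCube n k' m')) (hkk : k = k') :
    dyadicCube n k m = dyadicCube n k' m' := by
  subst hkk
  obtain ⟨x, hx1, hx2⟩ := Set.not_disjoint_iff.mp h
  exact Set.Subset.antisymm (dyadic_subset_of_le le_rfl hx1 hx2) (dyadic_subset_of_le le_rfl hx2 hx1)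

-- scale comparison (n ≥ 1)
lemma dyadic_scale_le_of_subset {n : ℕ} (hn : n ≠ 0) {k k' : ℤ} {m : Fin n → ℤ} {m' : Fin n → ℤ}
    (h : dyadicCube n k m ⊆ dyadicCube n k' m') : k ≤ k' := by
  by_contra hlt
  push_neg at hlt
  have hx := dyadic_corner_mem k' m'
  -- common point: corner of the smaller cube k: it's in both
  have hc : (fun i => (m i : ℝ) * (2:ℝ)^k) ∈ dyadicCube n k' m' := h (dyadic_corner_mem k m)
  have hsub : dyadicCube n k' m' ⊆ dyadicCube n k m :=
    dyadic_subset_of_le hlt.le hc (dyadic_corner_mem k m)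
  have heq : dyadicCube n k m = dyadicCube n k' m' := Set.Subset.antisymm h hsub
  have hv : volume (dyadicCube n k m) = volume (dyadicCube n k' m') := by rw [heq]
  rw [dyadic_volume, dyadic_volume] at hv
  have h2k : (0:ℝ) < (2:ℝ)^k := by positivity
  have h2k' : (0:ℝ) < (2:ℝ)^k' := by positivity
  have hlt2 : (2:ℝ)^k' < (2:ℝ)^k := zpow_lt_zpow_right₀ (by norm_num) hlt
  have : (ENNReal.ofReal ((2:ℝ)^k'))^n < (ENNReal.ofReal ((2:ℝ)^k))^n := by
    refine (ENNReal.pow_lt_pow_left_iff hn).mpr ?_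
    exact ENNReal.ofReal_lt_ofReal_iff_of_nonneg h2k'.le |>.mpr hlt2
  rw [hv] at this
  exact lt_irrefl _ this

lemma mass_mono {n : ℕ} {w : (Fin n → ℝ) → ℝ≥0∞} {A B : Set (Fin n → ℝ)} (h : A ⊆ B) :
    mass w A ≤ mass w B := lintegral_mono_set h

lemma avg_mul_vol {n : ℕ} {w : (Fin n → ℝ) → ℝ≥0∞} {Q : Set (Fin n → ℝ)}
    (h0 : volume Q ≠ 0) (ht : volume Q ≠ ∞) : avg w Q * volume Q = mass w Q := by
  rw [avg, ENNReal.div_mul_cancel h0 ht]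

-- choice-based scale functions
def scaleOf {n : ℕ} (R : Set (Fin n → ℝ)) : ℤ :=
  if h : IsDyadicCube R then h.choose else 0

def idxOf {n : ℕ} (R : Set (Fin n → ℝ)) : Fin n → ℤ :=
  if h : IsDyadicCube R then h.choose_spec.choose else 0

lemma eq_dyadic_rep {n : ℕ} {R : Set (Fin n → ℝ)} (h : IsDyadicCube R) :
    R = dyadicCube n (scaleOf R) (idxOf R) := by
  rw [scaleOf, idxOf, dif_pos h, dif_pos h]
  exact h.choose_spec.choose_spec

-- L6 : sparse packing
lemma sparse_sum_vol_le {n : ℕ} {eta : ℝ≥0∞} (heta0 : 0 < eta) (heta1 : eta ≤ 1)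
    {S : Set (Set (Fin n → ℝ))}
    {E : Set (Fin n → ℝ) → Set (Fin n → ℝ)}
    (hE : ∀ Q ∈ S, E Q ⊆ Q ∧ MeasurableSet (E Q) ∧ eta * volume Q ≤ volume (E Q))
    (hEd : S.PairwiseDisjoint E) (B : Set (Fin n → ℝ)) :
    ∑' (R : {R : Set (Fin n → ℝ) // R ∈ S ∧ R ⊆ B}), volume R.1 ≤ eta⁻¹ * volume B := by
  have heta_ne : eta ≠ 0 := heta0.ne'
  have heta_top : eta ≠ ∞ := (lt_of_le_of_lt heta1 ENNReal.one_lt_top).ne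
  calc ∑' (R : {R : Set (Fin n → ℝ) // R ∈ S ∧ R ⊆ B}), volume R.1
      ≤ ∑' (R : {R : Set (Fin n → ℝ) // R ∈ S ∧ R ⊆ B}), eta⁻¹ * volume (E R.1) := by
        apply ENNReal.tsum_le_tsum
        intro R
        have h1 : eta * volume R.1 ≤ volume (E R.1) := (hE R.1 R.2.1).2.2
        calc volume R.1 = eta⁻¹ * (eta * volume R.1) := by
              rw [← mul_assoc, ENNReal.inv_mul_cancel heta_ne heta_top, one_mul]
          _ ≤ eta⁻¹ * volume (E R.1) := by exact mul_le_mul_right h1 _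
    _ = eta⁻¹ * ∑' (R : {R : Set (Fin n → ℝ) // R ∈ S ∧ R ⊆ B}), volume (E R.1) :=
        ENNReal.tsum_mul_left
    _ ≤ eta⁻¹ * volume B := by
        apply mul_le_mul_right
        calc ∑' (R : {R : Set (Fin n → ℝ) // R ∈ S ∧ R ⊆ B}), volume (E R.1)
            ≤ volume (⋃ (R : {R : Set (Fin n → ℝ) // R ∈ S ∧ R ⊆ B}), E R.1) := by
              apply tsum_meas_le_meas_iUnion_of_disjoint
              · intro R; exact (hE R.1 R.2.1).2.1
              · intro R1 R2 hne
                have : R1.1 ≠ R2.1 := fun h => hne (Subtype.ext h)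
                exact hEd R1.2.1 R2.2.1 this
          _ ≤ volume B := by
              apply measure_mono
              apply Set.iUnion_subset
              intro R
              exact ((hE R.1 R.2.1).1).trans R.2.2

-- Level lemma
lemma level_lemma {n : ℕ} (hn : n ≠ 0) {eta : ℝ≥0∞} (heta0 : 0 < eta) (heta1 : eta ≤ 1)
    {S : Set (Set (Fin n → ℝ))} (hdy : ∀ R ∈ S, IsDyadicCube R)
    {E : Set (Fin n → ℝ) → Set (Fin n → ℝ)}
    (hE : ∀ R ∈ S, E R ⊆ R ∧ MeasurableSet (E R) ∧ eta * volume R ≤ volume (E R))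
    (hEd : S.PairwiseDisjoint E)
    {w : (Fin n → ℝ) → ℝ≥0∞} (hw : Measurable w)
    {Q : Set (Fin n → ℝ)} (hQ : Q ∈ S)
    {lam : ℝ≥0∞} (hl0 : lam ≠ 0) (hlt : lam ≠ ∞) :
    ∑' (R : {R : Set (Fin n → ℝ) // R ∈ S ∧ R ⊆ Q}),
        (if lam * volume R.1 ≤ mass w R.1 then volume R.1 else 0)
      ≤ eta⁻¹ * lam⁻¹ * mass w Q := by
  set P : Set (Set (Fin n → ℝ)) :=
    {R | R ∈ S ∧ R ⊆ Q ∧ lam * volume R ≤ mass w R} with hP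
  -- maximal elements
  have hmax : ∀ R ∈ P, ∃ M, M ∈ P ∧ R ⊆ M ∧ ∀ M' ∈ P, M ⊆ M' → M = M' := by
    intro R hR
    set CR : Set (Set (Fin n → ℝ)) := {M | M ∈ P ∧ R ⊆ M} with hCR
    have hRne : R.Nonempty := dyadic_nonempty (hdy R hR.1)
    have hinj : Set.InjOn scaleOf CR := by
      intro M1 hM1 M2 hM2 hsc
      have hd1 := hdy M1 hM1.1.1
      have hd2 := hdy M2 hM2.1.1
      obtain ⟨x, hx⟩ := hRne
      have hnd : ¬ Disjoint M1 M2 :=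
        Set.not_disjoint_iff.mpr ⟨x, hM1.2 hx, hM2.2 hx⟩
      rw [eq_dyadic_rep hd1, eq_dyadic_rep hd2]
      apply dyadic_same_scale_eq _ hsc
      rw [← eq_dyadic_rep hd1, ← eq_dyadic_rep hd2]
      exact hnd
    have himg : scaleOf '' CR ⊆ Set.Icc (scaleOf R) (scaleOf Q) := by
      rintro _ ⟨M, hM, rfl⟩
      have hdM := hdy M hM.1.1
      have hdR := hdy R hR.1
      have hdQ := hdy Q hQ
      constructor
      · apply dyadic_scale_le_of_subset hn (m := idxOf R) (m' := idxOf M)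
        rw [← eq_dyadic_rep hdR, ← eq_dyadic_rep hdM]
        exact hM.2
      · apply dyadic_scale_le_of_subset hn (m := idxOf M) (m' := idxOf Q)
        rw [← eq_dyadic_rep hdM, ← eq_dyadic_rep hdQ]
        exact hM.1.2.1
    have hfin : CR.Finite :=
      Set.Finite.of_finite_image ((Set.finite_Icc _ _).subset himg) hinj
    have hne : CR.Nonempty := ⟨R, hR, subset_rfl⟩
    obtain ⟨M, hM, hmax'⟩ := Set.Finite.exists_maximalFor id CR hfin hne
    exact ⟨M, hM.1, hM.2, fun M' hM' hsub => subset_antisymm hsub (hmax' ⟨hM', hM.2.trans hsub⟩ hsub)⟩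
  set mu : Set (Fin n → ℝ) → Set (Fin n → ℝ) :=
    fun R => if h : R ∈ P then (hmax R h).choose else ∅ with hmu
  have hmu_spec : ∀ R (h : R ∈ P),
      mu R ∈ P ∧ R ⊆ mu R ∧ ∀ M' ∈ P, mu R ⊆ M' → mu R = M' := by
    intro R h
    rw [hmu]; simp only [dif_pos h]
    exact (hmax R h).choose_spec
  have hval : ∀ R1 R2, R1 ∈ P → R2 ∈ P → mu R1 = mu R2 ∨ Disjoint (mu R1) (mu R2) := by
    intro R1 R2 h1 h2
    by_cases hd : Disjoint (mu R1) (mu R2)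
    · exact Or.inr hd
    · left
      obtain ⟨hQ1, _, hmax1⟩ := hmu_spec R1 h1
      obtain ⟨hQ2, _, hmax2⟩ := hmu_spec R2 h2
      rcases dyadic_nested_or_disjoint (hdy _ hQ1.1) (hdy _ hQ2.1) hd with hsub | hsub
      · exact hmax1 _ hQ2 hsub
      · exact (hmax2 _ hQ1 hsub).symm
  -- the fiber decomposition
  set g : {R : Set (Fin n → ℝ) // R ∈ S ∧ R ⊆ Q} → Set (Fin n → ℝ) :=
    fun R => mu R.1 with hg
  have hmemP : ∀ (R : {R : Set (Fin n → ℝ) // R ∈ S ∧ R ⊆ Q}), lam * volume R.1 ≤ mass w R.1 → R.1 ∈ P := by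
    intro R hc; exact ⟨R.2.1, R.2.2, hc⟩
  set nu := volume.withDensity w with hnu
  have hmass_eq : ∀ (A : Set (Fin n → ℝ)), MeasurableSet A → nu A = mass w A := by
    intro A hA; rw [hnu, withDensity_apply w hA]; rfl
  set K : Set (Fin n → ℝ) → Set (Fin n → ℝ) :=
    fun B => if B ∈ P ∧ B ∈ Set.range g then B else ∅ with hK
  have key : ∀ B : Set (Fin n → ℝ),
      ∑' (x : {R : {R : Set (Fin n → ℝ) // R ∈ S ∧ R ⊆ Q} // g R = B}), (if lam * volume x.1.1 ≤ mass w x.1.1 then volume x.1.1 else 0) ≤ eta⁻¹ * lam⁻¹ * nu (K B) := by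
    intro B
    by_cases hB : B ∈ P ∧ B ∈ Set.range g
    · have hKB : K B = B := if_pos hB
      have hBne : B.Nonempty := dyadic_nonempty (hdy B hB.1.1)
      have hcond : ∀ x : {R : {R : Set (Fin n → ℝ) // R ∈ S ∧ R ⊆ Q} // g R = B}, lam * volume x.1.1 ≤ mass w x.1.1 := by
        intro x
        by_contra hc
        have hnotP : x.1.1 ∉ P := fun hmem => hc hmem.2.2
        have : g x.1 = ∅ := by
          show mu x.1.1 = ∅
          rw [hmu]; simp only [dif_neg hnotP]
        rw [x.2] at this
        exact hBne.ne_empty this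
      have hsubB : ∀ x : {R : {R : Set (Fin n → ℝ) // R ∈ S ∧ R ⊆ Q} // g R = B}, x.1.1 ⊆ B := by
        intro x
        have hmem : x.1.1 ∈ P := ⟨x.1.2.1, x.1.2.2, hcond x⟩
        have h1 : x.1.1 ⊆ mu x.1.1 := (hmu_spec x.1.1 hmem).2.1
        have h2 : mu x.1.1 = B := x.2
        exact h1.trans h2.subset
      have step1 : ∑' (x : {R : {R : Set (Fin n → ℝ) // R ∈ S ∧ R ⊆ Q} // g R = B}), (if lam * volume x.1.1 ≤ mass w x.1.1 then volume x.1.1 else 0)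
          ≤ ∑' (R : {R : Set (Fin n → ℝ) // R ∈ S ∧ R ⊆ B}), volume R.1 := by
        have heq : ∀ x : {R : {R : Set (Fin n → ℝ) // R ∈ S ∧ R ⊆ Q} // g R = B}, (if lam * volume x.1.1 ≤ mass w x.1.1 then volume x.1.1 else 0) = volume x.1.1 := by
          intro x; exact if_pos (hcond x)
        calc ∑' (x : {R : {R : Set (Fin n → ℝ) // R ∈ S ∧ R ⊆ Q} // g R = B}), (if lam * volume x.1.1 ≤ mass w x.1.1 then volume x.1.1 else 0)
            = ∑' (x : {R : {R : Set (Fin n → ℝ) // R ∈ S ∧ R ⊆ Q} // g R = B}), volume x.1.1 := by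
              exact tsum_congr heq
          _ ≤ ∑' (R : {R : Set (Fin n → ℝ) // R ∈ S ∧ R ⊆ B}), volume R.1 := by
              have hinj : Function.Injective
                  (fun x : {R : {R : Set (Fin n → ℝ) // R ∈ S ∧ R ⊆ Q} // g R = B} =>
                    (⟨x.1.1, x.1.2.1, hsubB x⟩ :
                      {R : Set (Fin n → ℝ) // R ∈ S ∧ R ⊆ B})) := by
                intro a b hab
                have h' : a.1.1 = b.1.1 := Subtype.mk_eq_mk.mp hab
                exact Subtype.ext (Subtype.ext h')
              exact ENNReal.tsum_comp_le_tsum_of_injective hinj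
                (fun R : {R : Set (Fin n → ℝ) // R ∈ S ∧ R ⊆ B} => volume R.1)
      have step2 : ∑' (R : {R : Set (Fin n → ℝ) // R ∈ S ∧ R ⊆ B}), volume R.1
          ≤ eta⁻¹ * volume B := sparse_sum_vol_le heta0 heta1 hE hEd B
      have step3 : volume B ≤ lam⁻¹ * mass w B := by
        have h1 : lam * volume B ≤ mass w B := hB.1.2.2
        calc volume B = lam⁻¹ * (lam * volume B) := by
              rw [← mul_assoc, ENNReal.inv_mul_cancel hl0 hlt, one_mul]
          _ ≤ lam⁻¹ * mass w B := mul_le_mul_right h1 _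
      have hBmeas : MeasurableSet B := dyadic_measurable (hdy B hB.1.1)
      calc ∑' (x : {R : {R : Set (Fin n → ℝ) // R ∈ S ∧ R ⊆ Q} // g R = B}), (if lam * volume x.1.1 ≤ mass w x.1.1 then volume x.1.1 else 0)
          ≤ eta⁻¹ * volume B := step1.trans step2
        _ ≤ eta⁻¹ * (lam⁻¹ * mass w B) := mul_le_mul_right step3 _
        _ = eta⁻¹ * lam⁻¹ * nu (K B) := by
            rw [hKB, hmass_eq B hBmeas, mul_assoc]
    · have : ∀ x : {R : {R : Set (Fin n → ℝ) // R ∈ S ∧ R ⊆ Q} // g R = B}, (if lam * volume x.1.1 ≤ mass w x.1.1 then volume x.1.1 else 0) = 0 := by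
        intro x
        rcases em (lam * volume x.1.1 ≤ mass w x.1.1) with hc | hc
        · exfalso
          have hmem : x.1.1 ∈ P := ⟨x.1.2.1, x.1.2.2, hc⟩
          have h1 : mu x.1.1 ∈ P := (hmu_spec x.1.1 hmem).1
          have h2 : g x.1 = B := x.2
          exact hB ⟨h2 ▸ h1, ⟨x.1, h2⟩⟩
        · exact if_neg hc
      rw [tsum_congr this]
      simp
  -- disjointness of the K family
  have hKdisj : Pairwise (Function.onFun Disjoint K) := by
    intro B1 B2 hne
    show Disjoint (K B1) (K B2)
    by_cases h1 : B1 ∈ P ∧ B1 ∈ Set.range g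
    · by_cases h2 : B2 ∈ P ∧ B2 ∈ Set.range g
      · rw [hK]; simp only [if_pos h1, if_pos h2]
        obtain ⟨x1, hx1⟩ := h1.2
        obtain ⟨x2, hx2⟩ := h2.2
        have hm1 : x1.1 ∈ P := by
          by_contra hc
          have : g x1 = ∅ := by show mu x1.1 = ∅; rw [hmu]; simp only [dif_neg hc]
          rw [hx1] at this
          exact (dyadic_nonempty (hdy B1 h1.1.1)).ne_empty this
        have hm2 : x2.1 ∈ P := by
          by_contra hc
          have : g x2 = ∅ := by show mu x2.1 = ∅; rw [hmu]; simp only [dif_neg hc]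
          rw [hx2] at this
          exact (dyadic_nonempty (hdy B2 h2.1.1)).ne_empty this
        rcases hval x1.1 x2.1 hm1 hm2 with heq | hd
        · exfalso
          apply hne
          rw [← hx1, ← hx2]
          exact heq
        · rw [← hx1, ← hx2]; exact hd
      · rw [hK]; simp only [if_neg h2]; exact disjoint_empty _
    · rw [hK]; simp only [if_neg h1]; exact empty_disjoint _
  have hKmeas : ∀ B, MeasurableSet (K B) := by
    intro B
    rw [hK]
    by_cases h : B ∈ P ∧ B ∈ Set.range g
    · simp only [if_pos h]; exact dyadic_measurable (hdy B h.1.1)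
    · simp only [if_neg h]; exact MeasurableSet.empty
  have hKsub : ∀ B, K B ⊆ Q := by
    intro B
    rw [hK]
    by_cases h : B ∈ P ∧ B ∈ Set.range g
    · simp only [if_pos h]; exact h.1.2.1
    · simp only [if_neg h]; exact Set.empty_subset _
  -- assemble
  have hdecomp : ∑' (R : {R : Set (Fin n → ℝ) // R ∈ S ∧ R ⊆ Q}), (if lam * volume R.1 ≤ mass w R.1 then volume R.1 else 0)
      = ∑' (B : Set (Fin n → ℝ)) (x : {R : {R : Set (Fin n → ℝ) // R ∈ S ∧ R ⊆ Q} // g R = B}), (if lam * volume x.1.1 ≤ mass w x.1.1 then volume x.1.1 else 0) := by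
    rw [← (Equiv.sigmaFiberEquiv g).tsum_eq
      (fun R : {R : Set (Fin n → ℝ) // R ∈ S ∧ R ⊆ Q} =>
        if lam * volume R.1 ≤ mass w R.1 then volume R.1 else 0), ENNReal.tsum_sigma']
    rfl
  have hQmeas : MeasurableSet Q := dyadic_measurable (hdy Q hQ)
  calc ∑' (R : {R : Set (Fin n → ℝ) // R ∈ S ∧ R ⊆ Q}), (if lam * volume R.1 ≤ mass w R.1 then volume R.1 else 0)
      = ∑' (B : Set (Fin n → ℝ)) (x : {R : {R : Set (Fin n → ℝ) // R ∈ S ∧ R ⊆ Q} // g R = B}), (if lam * volume x.1.1 ≤ mass w x.1.1 then volume x.1.1 else 0) := hdecomp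
    _ ≤ ∑' (B : Set (Fin n → ℝ)), eta⁻¹ * lam⁻¹ * nu (K B) :=
        ENNReal.tsum_le_tsum key
    _ = eta⁻¹ * lam⁻¹ * ∑' (B : Set (Fin n → ℝ)), nu (K B) := ENNReal.tsum_mul_left
    _ ≤ eta⁻¹ * lam⁻¹ * nu Q := by
        apply mul_le_mul_right
        calc ∑' (B : Set (Fin n → ℝ)), nu (K B)
            ≤ nu (⋃ B, K B) := tsum_meas_le_meas_iUnion_of_disjoint nu hKmeas hKdisj
          _ ≤ nu Q := measure_mono (Set.iUnion_subset hKsub)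
    _ = eta⁻¹ * lam⁻¹ * mass w Q := by rw [hmass_eq Q hQmeas]

lemma pointwise_dyadic_bound {x wQ : ℝ≥0∞} (hx : x ≠ ∞) (h0 : wQ ≠ 0) (ht : wQ ≠ ∞)
    {s : ℝ} (hs : 0 ≤ s) :
    x ^ s ≤ wQ ^ s + (2:ℝ≥0∞)^s * wQ^s *
      ∑' j : ℕ, (if (2:ℝ≥0∞)^j * wQ ≤ x then (2:ℝ≥0∞)^((j:ℝ)*s) else 0) := by
  rcases le_or_gt x wQ with h | h
  · exact le_trans (ENNReal.rpow_le_rpow h hs) le_self_add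
  · set r : ℝ≥0∞ := x / wQ with hr
    have hrt : r ≠ ∞ := (ENNReal.div_lt_top hx h0).ne
    have hr1 : 1 < r := by
      rw [hr, ENNReal.lt_div_iff_mul_lt (Or.inl h0) (Or.inl ht), one_mul]
      exact h
    have hrx : r * wQ = x := ENNReal.div_mul_cancel h0 ht
    set t : ℝ := r.toReal with htt
    have ht1 : 1 < t := by
      rw [htt]
      have := (ENNReal.toReal_lt_toReal (by norm_num) hrt).mpr hr1
      simpa using this
    set mn : ℕ := ⌊t⌋₊ with hmn
    have hm1 : 1 ≤ mn := Nat.le_floor (by exact_mod_cast ht1.le)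
    set k : ℕ := Nat.log 2 mn with hk
    have hk1 : 2^k ≤ mn := Nat.pow_log_le_self 2 (by omega)
    have hk2 : mn < 2^(k+1) := Nat.lt_pow_succ_log_self (by norm_num) mn
    have claim1 : (2:ℝ≥0∞)^k * wQ ≤ x := by
      have h1 : ((2:ℝ)^k : ℝ) ≤ t := by
        calc ((2:ℝ)^k : ℝ) ≤ (mn : ℝ) := by exact_mod_cast hk1
          _ ≤ t := Nat.floor_le (by linarith)
      have h2 : (2:ℝ≥0∞)^k ≤ r := by
        rw [← ENNReal.ofReal_toReal hrt, ← htt]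
        calc (2:ℝ≥0∞)^k = ENNReal.ofReal ((2:ℝ)^k) := by
              rw [ENNReal.ofReal_pow (by norm_num)]; norm_num
          _ ≤ ENNReal.ofReal t := ENNReal.ofReal_le_ofReal h1
      calc (2:ℝ≥0∞)^k * wQ ≤ r * wQ := mul_le_mul_left h2 _
        _ = x := hrx
    have claim2 : x ≤ (2:ℝ≥0∞)^(k+1) * wQ := by
      have h1 : t ≤ ((2:ℝ)^(k+1) : ℝ) := by
        have := Nat.lt_floor_add_one t
        have h2 : (mn : ℝ) + 1 ≤ ((2:ℝ)^(k+1)) := by exact_mod_cast hk2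
        linarith
      have h2 : r ≤ (2:ℝ≥0∞)^(k+1) := by
        rw [← ENNReal.ofReal_toReal hrt, ← htt]
        calc ENNReal.ofReal t ≤ ENNReal.ofReal ((2:ℝ)^(k+1)) := ENNReal.ofReal_le_ofReal h1
          _ = (2:ℝ≥0∞)^(k+1) := by
              rw [ENNReal.ofReal_pow (by norm_num)]; norm_num
      calc x = r * wQ := hrx.symm
        _ ≤ (2:ℝ≥0∞)^(k+1) * wQ := mul_le_mul_left h2 _
    have expand : ((2:ℝ≥0∞)^(k+1))^s = (2:ℝ≥0∞)^s * (2:ℝ≥0∞)^((k:ℝ)*s) := by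
      rw [← ENNReal.rpow_natCast (2:ℝ≥0∞) (k+1), ← ENNReal.rpow_mul]
      have : (((k+1 : ℕ)):ℝ) * s = s + (k:ℝ) * s := by push_cast; ring
      rw [this, ENNReal.rpow_add _ _ (by norm_num) (by norm_num)]
    calc x ^ s ≤ ((2:ℝ≥0∞)^(k+1) * wQ)^s := ENNReal.rpow_le_rpow claim2 hs
      _ = ((2:ℝ≥0∞)^(k+1))^s * wQ^s := ENNReal.mul_rpow_of_nonneg _ _ hs
      _ = (2:ℝ≥0∞)^s * (2:ℝ≥0∞)^((k:ℝ)*s) * wQ^s := by rw [expand]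
      _ ≤ (2:ℝ≥0∞)^s * (∑' j : ℕ, (if (2:ℝ≥0∞)^j * wQ ≤ x then (2:ℝ≥0∞)^((j:ℝ)*s) else 0)) * wQ^s := by
          apply mul_le_mul_left
          apply mul_le_mul_right
          calc (2:ℝ≥0∞)^((k:ℝ)*s)
              = (if (2:ℝ≥0∞)^k * wQ ≤ x then (2:ℝ≥0∞)^((k:ℝ)*s) else 0) := by rw [if_pos claim1]
            _ ≤ _ := ENNReal.le_tsum k
      _ = (2:ℝ≥0∞)^s * wQ^s * (∑' j : ℕ, (if (2:ℝ≥0∞)^j * wQ ≤ x then (2:ℝ≥0∞)^((j:ℝ)*s) else 0)) := by ring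
      _ ≤ _ := le_add_self

lemma dyadicCube_zero (k : ℤ) (m : Fin 0 → ℤ) : dyadicCube 0 k m = Set.univ := by
  ext x; simp [dyadicCube]

lemma sparse_sum_rpow_le {n : ℕ} {eta : ℝ≥0∞} (heta0 : 0 < eta) (heta1 : eta ≤ 1)
    {S : Set (Set (Fin n → ℝ))} (hdy : ∀ R ∈ S, IsDyadicCube R)
    {E : Set (Fin n → ℝ) → Set (Fin n → ℝ)}
    (hE : ∀ R ∈ S, E R ⊆ R ∧ MeasurableSet (E R) ∧ eta * volume R ≤ volume (E R))
    (hEd : S.PairwiseDisjoint E)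
    {w : (Fin n → ℝ) → ℝ≥0∞} (hw : Measurable w)
    {Q : Set (Fin n → ℝ)} (hQ : Q ∈ S)
    {s : ℝ} (hs0 : 0 ≤ s) (hs1 : s < 1) (hwQ : avg w Q ≠ ∞) :
    ∑' (R : {R : Set (Fin n → ℝ) // R ∈ S ∧ R ⊆ Q}), (avg w R.1)^s * volume R.1
      ≤ (eta⁻¹ * (1 + (2:ℝ≥0∞)^s * (1 - (2:ℝ≥0∞)^(s-1))⁻¹)) * (avg w Q)^s * volume Q := by
  have heta1' : (1:ℝ≥0∞) ≤ eta⁻¹ := ENNReal.one_le_inv.mpr heta1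
  have hCge1 : (1:ℝ≥0∞) ≤ eta⁻¹ * (1 + (2:ℝ≥0∞)^s * (1 - (2:ℝ≥0∞)^(s-1))⁻¹) := by
    calc (1:ℝ≥0∞) = 1 * 1 := (one_mul 1).symm
      _ ≤ eta⁻¹ * (1 + (2:ℝ≥0∞)^s * (1 - (2:ℝ≥0∞)^(s-1))⁻¹) :=
          mul_le_mul' heta1' le_self_add
  by_cases hn : n = 0
  · -- all dyadic cubes are univ
    subst hn
    have huniv : ∀ R ∈ S, R = Set.univ := by
      intro R hR
      obtain ⟨k, m, rfl⟩ := hdy R hR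
      exact dyadicCube_zero k m
    have hQu : Q = Set.univ := huniv Q hQ
    haveI : Subsingleton {R : Set (Fin 0 → ℝ) // R ∈ S ∧ R ⊆ Q} := by
      constructor
      intro a b
      apply Subtype.ext
      rw [huniv a.1 a.2.1, huniv b.1 b.2.1]
    rcases isEmpty_or_nonempty {R : Set (Fin 0 → ℝ) // R ∈ S ∧ R ⊆ Q} with he | hne
    · rw [tsum_empty]
      exact zero_le
    · obtain ⟨a⟩ := hne
      have : ∑' (R : {R : Set (Fin 0 → ℝ) // R ∈ S ∧ R ⊆ Q}), (avg w R.1)^s * volume R.1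
          = (avg w a.1)^s * volume a.1 :=
        tsum_eq_single a (fun b hb => absurd (Subsingleton.elim b a) hb)
      rw [this, huniv a.1 a.2.1, ← hQu]
      calc (avg w Q)^s * volume Q = 1 * ((avg w Q)^s * volume Q) := (one_mul _).symm
        _ ≤ (eta⁻¹ * (1 + (2:ℝ≥0∞)^s * (1 - (2:ℝ≥0∞)^(s-1))⁻¹)) * ((avg w Q)^s * volume Q) :=
            mul_le_mul_left hCge1 _
        _ = _ := by ring
  · -- n ≠ 0
    have hQd : IsDyadicCube Q := hdy Q hQ
    have hvol0 : volume Q ≠ 0 := (dyadic_volume_pos hQd).ne'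
    have hvolt : volume Q ≠ ∞ := (dyadic_volume_lt_top hQd).ne
    have hmassQ : mass w Q ≠ ∞ := by
      rw [← avg_mul_vol hvol0 hvolt]
      exact ENNReal.mul_ne_top (by
        intro hcon
        exact hwQ hcon) hvolt
    by_cases hs0' : s = 0
    · subst hs0'
      have : ∀ (R : {R : Set (Fin n → ℝ) // R ∈ S ∧ R ⊆ Q}),
          (avg w R.1)^(0:ℝ) * volume R.1 = volume R.1 := by
        intro R; rw [ENNReal.rpow_zero, one_mul]
      rw [tsum_congr this]
      calc ∑' (R : {R : Set (Fin n → ℝ) // R ∈ S ∧ R ⊆ Q}), volume R.1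
          ≤ eta⁻¹ * volume Q := sparse_sum_vol_le heta0 heta1 hE hEd Q
        _ = eta⁻¹ * ((avg w Q)^(0:ℝ) * volume Q) := by rw [ENNReal.rpow_zero, one_mul]
        _ ≤ (eta⁻¹ * (1 + (2:ℝ≥0∞)^(0:ℝ) * (1 - (2:ℝ≥0∞)^((0:ℝ)-1))⁻¹)) * ((avg w Q)^(0:ℝ) * volume Q) := by
            apply mul_le_mul_left
            exact le_mul_of_one_le_right' le_self_add
        _ = _ := by ring
    · have hspos : 0 < s := lt_of_le_of_ne hs0 (Ne.symm hs0')
      by_cases hw0 : avg w Q = 0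
      · have hmass0 : mass w Q = 0 := by
          rcases ENNReal.div_eq_zero_iff.mp hw0 with h | h
          · exact h
          · exact absurd h hvolt
        have : ∀ (R : {R : Set (Fin n → ℝ) // R ∈ S ∧ R ⊆ Q}),
            (avg w R.1)^s * volume R.1 = 0 := by
          intro R
          have h1 : mass w R.1 = 0 := le_antisymm (hmass0 ▸ mass_mono R.2.2) (zero_le)
          have h2 : avg w R.1 = 0 := by rw [avg, h1, ENNReal.zero_div]
          rw [h2, ENNReal.zero_rpow_of_pos hspos, zero_mul]
        rw [tsum_congr this]
        simp
      · -- main case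
        set wQ := avg w Q with hwQdef
        have hfin : ∀ (R : {R : Set (Fin n → ℝ) // R ∈ S ∧ R ⊆ Q}), avg w R.1 ≠ ∞ := by
          intro R
          have hRd := hdy R.1 R.2.1
          have h1 : mass w R.1 ≤ mass w Q := mass_mono R.2.2
          have h2 : mass w R.1 ≠ ∞ := (lt_of_le_of_lt h1 (lt_top_iff_ne_top.mpr hmassQ)).ne
          exact (ENNReal.div_lt_top h2 (dyadic_volume_pos hRd).ne').ne
        have haux : ∀ (R : {R : Set (Fin n → ℝ) // R ∈ S ∧ R ⊆ Q}),
            (avg w R.1)^s * volume R.1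
              ≤ wQ^s * volume R.1 + (2:ℝ≥0∞)^s * wQ^s *
                ∑' j : ℕ, ((if (2:ℝ≥0∞)^j * wQ ≤ avg w R.1 then (2:ℝ≥0∞)^((j:ℝ)*s) else 0)
                  * volume R.1) := by
          intro R
          have hpt := pointwise_dyadic_bound (hfin R) hw0 hwQ (le_of_lt hspos)
          calc (avg w R.1)^s * volume R.1
              ≤ (wQ^s + (2:ℝ≥0∞)^s * wQ^s *
                  ∑' j : ℕ, (if (2:ℝ≥0∞)^j * wQ ≤ avg w R.1 then (2:ℝ≥0∞)^((j:ℝ)*s) else 0))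
                  * volume R.1 := mul_le_mul_left hpt _
            _ = wQ^s * volume R.1 + (2:ℝ≥0∞)^s * wQ^s *
                ((∑' j : ℕ, (if (2:ℝ≥0∞)^j * wQ ≤ avg w R.1 then (2:ℝ≥0∞)^((j:ℝ)*s) else 0))
                  * volume R.1) := by ring
            _ = _ := by rw [ENNReal.tsum_mul_right]
        have hlevel : ∀ j : ℕ,
            ∑' (R : {R : Set (Fin n → ℝ) // R ∈ S ∧ R ⊆ Q}),
              ((if (2:ℝ≥0∞)^j * wQ ≤ avg w R.1 then (2:ℝ≥0∞)^((j:ℝ)*s) else 0) * volume R.1)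
            ≤ (2:ℝ≥0∞)^((j:ℝ)*s) * (((2:ℝ≥0∞)^j)⁻¹ * (eta⁻¹ * volume Q)) := by
          intro j
          have hlam0 : (2:ℝ≥0∞)^j * wQ ≠ 0 :=
            mul_ne_zero (pow_ne_zero j (by norm_num)) hw0
          have hlamt : (2:ℝ≥0∞)^j * wQ ≠ ∞ :=
            ENNReal.mul_ne_top (ENNReal.pow_ne_top (by norm_num)) hwQ
          have hconv : ∀ (R : {R : Set (Fin n → ℝ) // R ∈ S ∧ R ⊆ Q}),
              ((if (2:ℝ≥0∞)^j * wQ ≤ avg w R.1 then (2:ℝ≥0∞)^((j:ℝ)*s) else 0) * volume R.1)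
              = (2:ℝ≥0∞)^((j:ℝ)*s) *
                (if ((2:ℝ≥0∞)^j * wQ) * volume R.1 ≤ mass w R.1 then volume R.1 else 0) := by
            intro R
            have hRd := hdy R.1 R.2.1
            have hcond : ((2:ℝ≥0∞)^j * wQ ≤ avg w R.1)
                ↔ ((2:ℝ≥0∞)^j * wQ) * volume R.1 ≤ mass w R.1 := by
              rw [avg]
              exact ENNReal.le_div_iff_mul_le (Or.inl (dyadic_volume_pos hRd).ne')
                (Or.inl (dyadic_volume_lt_top hRd).ne)
            by_cases hc : (2:ℝ≥0∞)^j * wQ ≤ avg w R.1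
            · rw [if_pos hc, if_pos (hcond.mp hc)]
            · rw [if_neg hc, if_neg (fun hcc => hc (hcond.mpr hcc)), zero_mul, mul_zero]
          rw [tsum_congr hconv, ENNReal.tsum_mul_left]
          apply mul_le_mul_right
          calc ∑' (R : {R : Set (Fin n → ℝ) // R ∈ S ∧ R ⊆ Q}),
              (if ((2:ℝ≥0∞)^j * wQ) * volume R.1 ≤ mass w R.1 then volume R.1 else 0)
              ≤ eta⁻¹ * ((2:ℝ≥0∞)^j * wQ)⁻¹ * mass w Q :=
                level_lemma hn heta0 heta1 hdy hE hEd hw hQ hlam0 hlamt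
            _ = ((2:ℝ≥0∞)^j)⁻¹ * (eta⁻¹ * volume Q) := by
                rw [ENNReal.mul_inv (Or.inl (pow_ne_zero j (by norm_num)))
                  (Or.inl (ENNReal.pow_ne_top (by norm_num))),
                  ← avg_mul_vol hvol0 hvolt, ← hwQdef]
                calc eta⁻¹ * (((2:ℝ≥0∞)^j)⁻¹ * wQ⁻¹) * (wQ * volume Q)
                    = eta⁻¹ * ((2:ℝ≥0∞)^j)⁻¹ * (wQ⁻¹ * wQ) * volume Q := by ring
                  _ = ((2:ℝ≥0∞)^j)⁻¹ * (eta⁻¹ * volume Q) := by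
                      rw [ENNReal.inv_mul_cancel hw0 hwQ]; ring
        have hgeom : ∀ j : ℕ,
            (2:ℝ≥0∞)^((j:ℝ)*s) * ((2:ℝ≥0∞)^j)⁻¹ = ((2:ℝ≥0∞)^(s-1))^j := by
          intro j
          rw [← ENNReal.rpow_natCast (2:ℝ≥0∞) j, ← ENNReal.rpow_neg]
          rw [← ENNReal.rpow_add _ _ (by norm_num) (by norm_num)]
          rw [← ENNReal.rpow_natCast ((2:ℝ≥0∞)^(s-1)) j, ← ENNReal.rpow_mul]
          congr 1
          ring
        calc ∑' (R : {R : Set (Fin n → ℝ) // R ∈ S ∧ R ⊆ Q}), (avg w R.1)^s * volume R.1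
            ≤ ∑' (R : {R : Set (Fin n → ℝ) // R ∈ S ∧ R ⊆ Q}),
                (wQ^s * volume R.1 + (2:ℝ≥0∞)^s * wQ^s *
                  ∑' j : ℕ, ((if (2:ℝ≥0∞)^j * wQ ≤ avg w R.1 then (2:ℝ≥0∞)^((j:ℝ)*s) else 0)
                    * volume R.1)) := ENNReal.tsum_le_tsum haux
          _ = wQ^s * (∑' (R : {R : Set (Fin n → ℝ) // R ∈ S ∧ R ⊆ Q}), volume R.1)
              + (2:ℝ≥0∞)^s * wQ^s *
                ∑' (R : {R : Set (Fin n → ℝ) // R ∈ S ∧ R ⊆ Q}),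
                  (∑' j : ℕ, ((if (2:ℝ≥0∞)^j * wQ ≤ avg w R.1 then (2:ℝ≥0∞)^((j:ℝ)*s) else 0)
                    * volume R.1)) := by
              rw [ENNReal.tsum_add, ENNReal.tsum_mul_left, ENNReal.tsum_mul_left]
          _ ≤ wQ^s * (eta⁻¹ * volume Q)
              + (2:ℝ≥0∞)^s * wQ^s *
                ∑' j : ℕ, ((2:ℝ≥0∞)^((j:ℝ)*s) * (((2:ℝ≥0∞)^j)⁻¹ * (eta⁻¹ * volume Q))) := by
              apply add_le_add
              · exact mul_le_mul_right (sparse_sum_vol_le heta0 heta1 hE hEd Q) _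
              · apply mul_le_mul_right
                rw [ENNReal.tsum_comm]
                exact ENNReal.tsum_le_tsum hlevel
          _ = wQ^s * (eta⁻¹ * volume Q)
              + (2:ℝ≥0∞)^s * wQ^s * ((eta⁻¹ * volume Q) *
                ∑' j : ℕ, ((2:ℝ≥0∞)^(s-1))^j) := by
              congr 1
              have : ∀ j : ℕ, (2:ℝ≥0∞)^((j:ℝ)*s) * (((2:ℝ≥0∞)^j)⁻¹ * (eta⁻¹ * volume Q))
                  = ((2:ℝ≥0∞)^(s-1))^j * (eta⁻¹ * volume Q) := by
                intro j
                rw [← hgeom j]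
                ring
              rw [tsum_congr this, ENNReal.tsum_mul_right]
              ring
          _ = wQ^s * (eta⁻¹ * volume Q)
              + (2:ℝ≥0∞)^s * wQ^s * ((eta⁻¹ * volume Q) * (1 - (2:ℝ≥0∞)^(s-1))⁻¹) := by
              rw [ENNReal.tsum_geometric]
          _ = (eta⁻¹ * (1 + (2:ℝ≥0∞)^s * (1 - (2:ℝ≥0∞)^(s-1))⁻¹)) * wQ^s * volume Q := by
              ring

theorem statement13 (eta : ℝ≥0∞) (heta0 : 0 < eta) (heta1 : eta ≤ 1) (p : ℝ)
    (hp : 2 ≤ p) (n : ℕ) :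
    ∃ C : ℝ≥0∞, C < ∞ ∧
      ∀ (w σ : (Fin n → ℝ) → ℝ≥0∞), Measurable w → Measurable σ →
      ∀ (S : Set (Set (Fin n → ℝ))), IsSparse eta S →
      (∀ Q' ∈ S, 1 ≤ avg σ Q') →
      ∀ (ψ : ℝ≥0∞ → ℝ≥0∞), MonotoneOn ψ (Set.Ici 1) → (∀ t, 0 < ψ t) →
      (∫⁻ t in Set.Ioi (1:ℝ), (ENNReal.ofReal t * ψ (ENNReal.ofReal t))⁻¹) < ∞ →
      (⨆ (Q' : Set (Fin n → ℝ)) (_ : Q' ∈ S),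
          avg w Q' * (avg σ Q') ^ (p-1) * ψ (avg σ Q')) < ∞ →
      ∀ Q ∈ S,
      ∑' Q' : {Q' : Set (Fin n → ℝ) // Q' ∈ S ∧ Q' ⊆ Q ∧
          (avg σ Q) ^ ((2:ℝ)⁻¹) < avg σ Q'},
        avg σ Q'.1 * mass w Q'.1
      ≤ C * (⨆ (Q' : Set (Fin n → ℝ)) (_ : Q' ∈ S),
            avg w Q' * (avg σ Q') ^ (p-1) * ψ (avg σ Q')) ^ (1/(p-1)) *
          (ψ ((avg σ Q) ^ ((2:ℝ)⁻¹)))⁻¹ ^ (1/(p-1)) *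
          (avg w Q) ^ (1 - 1/(p-1)) * volume Q := by
  have hp1 : (1:ℝ) < p := lt_of_lt_of_le one_lt_two hp
  have hpne : p - 1 ≠ 0 := by linarith
  have hβpos : 0 < 1/(p-1) := div_pos one_pos (by linarith)
  have hβle1 : 1/(p-1) ≤ 1 := by
    rw [div_le_one (by linarith)]
    linarith
  refine ⟨eta⁻¹ * (1 + (2:ℝ≥0∞)^(1 - 1/(p-1)) * (1 - (2:ℝ≥0∞)^((1 - 1/(p-1)) - 1))⁻¹),
    ?_, ?_⟩
  · have h1 : eta⁻¹ < ∞ := ENNReal.inv_lt_top.mpr heta0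
    have h2 : (2:ℝ≥0∞)^(1 - 1/(p-1)) < ∞ :=
      ENNReal.rpow_lt_top_of_nonneg (by linarith) (by norm_num)
    have h3 : (1 - (2:ℝ≥0∞)^((1 - 1/(p-1)) - 1))⁻¹ < ∞ := by
      rw [ENNReal.inv_lt_top]
      rw [tsub_pos_iff_lt]
      exact ENNReal.rpow_lt_one_of_one_lt_of_neg (by norm_num : (1:ℝ≥0∞) < 2) (by linarith)
    exact ENNReal.mul_lt_top h1 (ENNReal.add_lt_top.mpr ⟨ENNReal.one_lt_top,
      ENNReal.mul_lt_top h2 h3⟩)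
  · intro w σ hw hσm S hS hσ1 ψ hψm hψpos hψint hA Q hQ
    obtain ⟨hdy, E, hE, hEd⟩ := hS
    set A : ℝ≥0∞ := ⨆ (Q' : Set (Fin n → ℝ)) (_ : Q' ∈ S),
      avg w Q' * (avg σ Q') ^ (p-1) * ψ (avg σ Q') with hAdef
    set β : ℝ := 1/(p-1) with hβdef
    set s : ℝ := 1 - β with hsdef
    have hs0 : 0 ≤ s := by rw [hsdef]; linarith
    have hs1 : s < 1 := by rw [hsdef]; linarith
    have hAle : ∀ R ∈ S, avg w R * (avg σ R)^(p-1) * ψ (avg σ R) ≤ A := by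
      intro R hR
      exact le_iSup₂ (f := fun (Q' : Set (Fin n → ℝ)) (_ : Q' ∈ S) =>
        avg w Q' * (avg σ Q') ^ (p-1) * ψ (avg σ Q')) R hR
    have hAtop : A ≠ ∞ := hA.ne
    have hσQ : 1 ≤ avg σ Q := hσ1 Q hQ
    have hσhalf : (1:ℝ≥0∞) ≤ (avg σ Q)^((2:ℝ)⁻¹) := by
      calc (1:ℝ≥0∞) = 1^((2:ℝ)⁻¹) := (ENNReal.one_rpow _).symm
        _ ≤ _ := ENNReal.rpow_le_rpow hσQ (by norm_num)
    set ψ0 : ℝ≥0∞ := ψ ((avg σ Q)^((2:ℝ)⁻¹)) with hψ0def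
    have hψ0pos : 0 < ψ0 := hψpos _
    have hwfin : ∀ R ∈ S, avg w R ≤ A * (ψ 1)⁻¹ := by
      intro R hR
      have hs1R : 1 ≤ avg σ R := hσ1 R hR
      have e1 : (1:ℝ≥0∞) ≤ (avg σ R)^(p-1) := by
        calc (1:ℝ≥0∞) = 1^(p-1) := (ENNReal.one_rpow _).symm
          _ ≤ _ := ENNReal.rpow_le_rpow hs1R (by linarith)
      have e2 : ψ 1 ≤ ψ (avg σ R) := hψm (Set.mem_Ici.mpr le_rfl) (Set.mem_Ici.mpr hs1R) hs1R
      have h1 : avg w R * ψ 1 ≤ avg w R * (avg σ R)^(p-1) * ψ (avg σ R) := by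
        calc avg w R * ψ 1 = avg w R * 1 * ψ 1 := by rw [mul_one]
          _ ≤ avg w R * (avg σ R)^(p-1) * ψ (avg σ R) := mul_le_mul' (mul_le_mul' le_rfl e1) e2
      have h2 : avg w R * ψ 1 ≤ A := h1.trans (hAle R hR)
      have h3 : avg w R ≤ A / ψ 1 :=
        (ENNReal.le_div_iff_mul_le (Or.inl (hψpos 1).ne') (Or.inr hAtop)).mpr h2
      rwa [div_eq_mul_inv] at h3
    have hwfin' : ∀ R ∈ S, avg w R ≠ ∞ := by
      intro R hR
      exact ne_top_of_le_ne_top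
        (ENNReal.mul_ne_top hAtop (ENNReal.inv_ne_top.mpr (hψpos 1).ne')) (hwfin R hR)
    have key : ∀ (x : {Q' : Set (Fin n → ℝ) // Q' ∈ S ∧ Q' ⊆ Q ∧
        (avg σ Q) ^ ((2:ℝ)⁻¹) < avg σ Q'}),
        avg σ x.1 * mass w x.1 ≤ (A^β * (ψ0⁻¹)^β) * ((avg w x.1)^s * volume x.1) := by
      intro x
      have hRS : x.1 ∈ S := x.2.1
      have hRd : IsDyadicCube x.1 := hdy x.1 hRS
      have hv0 : volume x.1 ≠ 0 := (dyadic_volume_pos hRd).ne'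
      have hvt : volume x.1 ≠ ∞ := (dyadic_volume_lt_top hRd).ne
      suffices hkey2 : avg σ x.1 * avg w x.1 ≤ A^β * (ψ0⁻¹)^β * (avg w x.1)^s by
        calc avg σ x.1 * mass w x.1 = (avg σ x.1 * avg w x.1) * volume x.1 := by
              rw [← avg_mul_vol hv0 hvt]; ring
          _ ≤ (A^β * (ψ0⁻¹)^β * (avg w x.1)^s) * volume x.1 := mul_le_mul_left hkey2 _
          _ = _ := by ring
      by_cases hwR0 : avg w x.1 = 0
      · rw [hwR0, mul_zero]; exact zero_le
      · have hwRt : avg w x.1 ≠ ∞ := hwfin' x.1 hRS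
        have hσR1 : 1 ≤ avg σ x.1 := hσ1 x.1 hRS
        have hψmono : ψ0 ≤ ψ (avg σ x.1) :=
          hψm (Set.mem_Ici.mpr hσhalf) (Set.mem_Ici.mpr hσR1) (le_of_lt x.2.2.2)
        have hprod : avg w x.1 * (avg σ x.1)^(p-1) * ψ0 ≤ A := by
          calc avg w x.1 * (avg σ x.1)^(p-1) * ψ0
              ≤ avg w x.1 * (avg σ x.1)^(p-1) * ψ (avg σ x.1) := mul_le_mul_right hψmono _
            _ ≤ A := hAle x.1 hRS
        have hσpne : (avg σ x.1)^(p-1) ≠ 0 := by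
          intro hcon
          have : (1:ℝ≥0∞) ≤ (avg σ x.1)^(p-1) := by
            calc (1:ℝ≥0∞) = 1^(p-1) := (ENNReal.one_rpow _).symm
              _ ≤ _ := ENNReal.rpow_le_rpow hσR1 (by linarith)
          rw [hcon] at this
          exact (not_le.mpr zero_lt_one) this
        have hψ0top : ψ0 ≠ ∞ := by
          intro hcon
          have h0 : avg w x.1 * (avg σ x.1)^(p-1) ≠ 0 := mul_ne_zero hwR0 hσpne
          rw [hcon, ENNReal.mul_top h0] at hprod
          exact hAtop (top_le_iff.mp hprod)
        have hstep : (avg σ x.1)^(p-1) * avg w x.1 ≤ A * ψ0⁻¹ := by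
          have h4 : avg w x.1 * (avg σ x.1)^(p-1) ≤ A / ψ0 :=
            (ENNReal.le_div_iff_mul_le (Or.inl hψ0pos.ne') (Or.inr hAtop)).mpr hprod
          rw [div_eq_mul_inv] at h4
          rw [mul_comm]
          exact h4
        calc avg σ x.1 * avg w x.1 = ((avg σ x.1)^(p-1))^β * avg w x.1 := by
              rw [← ENNReal.rpow_mul,
                show (p-1) * β = 1 by rw [hβdef]; field_simp, ENNReal.rpow_one]
          _ = ((avg σ x.1)^(p-1))^β * ((avg w x.1)^β * (avg w x.1)^s) := by
              rw [← ENNReal.rpow_add _ _ hwR0 hwRt,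
                show β + s = 1 by rw [hsdef]; ring, ENNReal.rpow_one]
          _ = (((avg σ x.1)^(p-1)) * avg w x.1)^β * (avg w x.1)^s := by
              rw [ENNReal.mul_rpow_of_nonneg _ _ hβpos.le]; ring
          _ ≤ (A * ψ0⁻¹)^β * (avg w x.1)^s :=
              mul_le_mul_left (ENNReal.rpow_le_rpow hstep hβpos.le) _
          _ = A^β * (ψ0⁻¹)^β * (avg w x.1)^s := by
              rw [ENNReal.mul_rpow_of_nonneg _ _ hβpos.le]
    have hwQfin : avg w Q ≠ ∞ := hwfin' Q hQ
    have hinj : Function.Injective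
        (fun (x : {Q' : Set (Fin n → ℝ) // Q' ∈ S ∧ Q' ⊆ Q ∧
            (avg σ Q) ^ ((2:ℝ)⁻¹) < avg σ Q'}) =>
          (⟨x.1, x.2.1, x.2.2.1⟩ : {R : Set (Fin n → ℝ) // R ∈ S ∧ R ⊆ Q})) := by
      intro a b hab
      exact Subtype.ext (Subtype.mk_eq_mk.mp hab)
    calc ∑' (x : {Q' : Set (Fin n → ℝ) // Q' ∈ S ∧ Q' ⊆ Q ∧
          (avg σ Q) ^ ((2:ℝ)⁻¹) < avg σ Q'}), avg σ x.1 * mass w x.1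
        ≤ ∑' (x : {Q' : Set (Fin n → ℝ) // Q' ∈ S ∧ Q' ⊆ Q ∧
            (avg σ Q) ^ ((2:ℝ)⁻¹) < avg σ Q'}),
            (A^β * (ψ0⁻¹)^β) * ((avg w x.1)^s * volume x.1) := ENNReal.tsum_le_tsum key
      _ = (A^β * (ψ0⁻¹)^β) * ∑' (x : {Q' : Set (Fin n → ℝ) // Q' ∈ S ∧ Q' ⊆ Q ∧
            (avg σ Q) ^ ((2:ℝ)⁻¹) < avg σ Q'}), ((avg w x.1)^s * volume x.1) :=
          ENNReal.tsum_mul_left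
      _ ≤ (A^β * (ψ0⁻¹)^β) *
            ∑' (R : {R : Set (Fin n → ℝ) // R ∈ S ∧ R ⊆ Q}), ((avg w R.1)^s * volume R.1) :=
          mul_le_mul_right (ENNReal.tsum_comp_le_tsum_of_injective hinj
            (fun (R : {R : Set (Fin n → ℝ) // R ∈ S ∧ R ⊆ Q}) => (avg w R.1)^s * volume R.1)) _
      _ ≤ (A^β * (ψ0⁻¹)^β) *
            ((eta⁻¹ * (1 + (2:ℝ≥0∞)^s * (1 - (2:ℝ≥0∞)^(s-1))⁻¹)) * (avg w Q)^s * volume Q) :=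
          mul_le_mul_right
            (sparse_sum_rpow_le heta0 heta1 hdy hE hEd hw hQ hs0 hs1 hwQfin) _
      _ = (eta⁻¹ * (1 + (2:ℝ≥0∞)^s * (1 - (2:ℝ≥0∞)^(s - 1))⁻¹)) * A^β * (ψ0⁻¹)^β
            * (avg w Q)^s * volume Q := by ring
end
end

section
/- Let 1 < p < 2, S an η-sparse family of dyadic cubes, w, σ weights with σ_{Q'} ≥ 1 for all Q' ∈ S, and let [w,σ]_{A_p} = sup_{Q' ∈ S} w_{Q'} σ_{Q'}^{p-1} be finite. Let ψ : [1,∞) → (0,∞) be increasing. Fix Q ∈ S and define E_0 = {Q' ∈ S : Q' ⊆ Q, σ_{Q'} ≤ σ_Q^{1/2}, w_{Q'} σ_{Q'}^{p-1} ≤ [w,σ]_{A_p}/ψ(σ_Q)}. Then ∑_{Q' ∈ E_0} σ_{Q'} w(Q') ≤ C ([w,σ]_{A_p}/ψ(σ_Q)) σ_Q^{2-p} |Q|, with C depending only on η, p, n. -/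
open MeasureTheory Set
open scoped ENNReal

noncomputable section

lemma dyadic_eq_pi (n : ℕ) (k : ℤ) (m : Fin n → ℤ) :
    dyadicCube n k m = Set.pi Set.univ (fun i => Ico ((m i : ℝ) * 2 ^ k) (((m i : ℝ) + 1) * 2 ^ k)) := by
  ext x; simp [dyadicCube, Set.mem_pi, Set.mem_Ico]

lemma vol_dyadic {n : ℕ} (k : ℤ) (m : Fin n → ℤ) :
    volume (dyadicCube n k m) ≠ 0 ∧ volume (dyadicCube n k m) ≠ ∞ := by
  rw [dyadic_eq_pi, volume_pi_pi]
  constructor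
  · refine (CanonicallyOrderedAdd.prod_pos.2 fun i _ => ?_).ne'
    rw [Real.volume_Ico]
    have : (0:ℝ) < ((m i : ℝ) + 1) * 2 ^ k - (m i : ℝ) * 2 ^ k := by
      have : (0:ℝ) < (2:ℝ) ^ k := by positivity
      nlinarith
    exact ENNReal.ofReal_pos.2 this
  · refine (ENNReal.prod_lt_top fun i _ => ?_).ne
    rw [Real.volume_Ico]; exact ENNReal.ofReal_lt_top

lemma vol_sum_aux {n : ℕ} {eta : ℝ≥0∞} (heta0 : eta ≠ 0) (hetane : eta ≠ ∞)
    {ι : Type*} [Countable ι] (Q : Set (Fin n → ℝ)) (f : ι → Set (Fin n → ℝ))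
    (E : Set (Fin n → ℝ) → Set (Fin n → ℝ))
    (hmeas : ∀ i, MeasurableSet (E (f i)))
    (hsparse : ∀ i, eta * volume (f i) ≤ volume (E (f i)))
    (hsub : ∀ i, E (f i) ⊆ Q)
    (hd : Pairwise (Function.onFun Disjoint fun i => E (f i))) :
    ∑' i, volume (f i) ≤ eta⁻¹ * volume Q := by
  calc ∑' i, volume (f i) ≤ ∑' i, eta⁻¹ * volume (E (f i)) := by
        refine ENNReal.tsum_le_tsum fun i => ?_
        calc volume (f i) = eta⁻¹ * (eta * volume (f i)) := by
              rw [← mul_assoc, ENNReal.inv_mul_cancel heta0 hetane, one_mul]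
          _ ≤ eta⁻¹ * volume (E (f i)) := mul_le_mul_right (hsparse i) _
    _ = eta⁻¹ * ∑' i, volume (E (f i)) := ENNReal.tsum_mul_left
    _ = eta⁻¹ * volume (⋃ i, E (f i)) := by rw [measure_iUnion hd hmeas]
    _ ≤ eta⁻¹ * volume Q := mul_le_mul_right (measure_mono (iUnion_subset hsub)) _

theorem statement15 (eta : ℝ≥0∞) (heta0 : 0 < eta) (heta1 : eta ≤ 1) (p : ℝ)
    (hp1 : 1 < p) (hp2 : p < 2) (n : ℕ) :
    ∃ C : ℝ≥0∞, C < ∞ ∧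
      ∀ (w σ : (Fin n → ℝ) → ℝ≥0∞), Measurable w → Measurable σ →
      ∀ (S : Set (Set (Fin n → ℝ))), IsSparse eta S →
      (∀ Q' ∈ S, 1 ≤ avg σ Q') →
      (⨆ (Q' : Set (Fin n → ℝ)) (_ : Q' ∈ S), avg w Q' * (avg σ Q') ^ (p-1)) < ∞ →
      ∀ (ψ : ℝ≥0∞ → ℝ≥0∞), MonotoneOn ψ (Set.Ici 1) → (∀ t, 0 < ψ t) →
      ∀ Q ∈ S,
      ∑' Q' : {Q' : Set (Fin n → ℝ) // Q' ∈ S ∧ Q' ⊆ Q ∧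
          avg σ Q' ≤ (avg σ Q) ^ ((2:ℝ)⁻¹) ∧
          avg w Q' * (avg σ Q') ^ (p-1) ≤
            (⨆ (P : Set (Fin n → ℝ)) (_ : P ∈ S), avg w P * (avg σ P) ^ (p-1)) / ψ (avg σ Q)},
        avg σ Q'.1 * mass w Q'.1
      ≤ C * ((⨆ (P : Set (Fin n → ℝ)) (_ : P ∈ S), avg w P * (avg σ P) ^ (p-1)) / ψ (avg σ Q)) *
          (avg σ Q) ^ (2-p) * volume Q := by
  refine ⟨eta⁻¹, ENNReal.inv_lt_top.2 heta0, ?_⟩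
  intro w σ hw hσ S hS hσ1 hA ψ hψmono hψpos Q hQ
  obtain ⟨hdy, E, hE, hdisj⟩ := hS
  set A : ℝ≥0∞ := ⨆ (P : Set (Fin n → ℝ)) (_ : P ∈ S), avg w P * (avg σ P) ^ (p-1) with hAdef
  set K : ℝ≥0∞ := A / ψ (avg σ Q) with hKdef
  set X : ℝ≥0∞ := (avg σ Q) ^ (2-p) with hXdef
  have hetane : eta ≠ ∞ := (lt_of_le_of_lt heta1 (by simp)).ne
  -- countability
  have hScount : S.Countable :=
    (Set.countable_range fun km : ℤ × (Fin n → ℤ) => dyadicCube n km.1 km.2).mono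
      (fun Q' hQ' => by obtain ⟨k, m, h⟩ := hdy Q' hQ'; exact ⟨(k, m), h.symm⟩)
  have hsubcount : Countable {Q' : Set (Fin n → ℝ) // Q' ∈ S ∧ Q' ⊆ Q ∧
      avg σ Q' ≤ (avg σ Q) ^ ((2:ℝ)⁻¹) ∧ avg w Q' * (avg σ Q') ^ (p-1) ≤ A / ψ (avg σ Q)} :=
    (hScount.mono (fun _ h => h.1)).to_subtype
  -- σ' power comparison
  have hXle : ∀ Q', avg σ Q' ≤ (avg σ Q) ^ ((2:ℝ)⁻¹) → (avg σ Q') ^ (2-p) ≤ X := by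
    intro Q' h
    refine ENNReal.rpow_le_rpow ?_ (by linarith)
    refine le_trans h ?_
    calc (avg σ Q) ^ ((2:ℝ)⁻¹) ≤ (avg σ Q) ^ (1:ℝ) :=
          ENNReal.rpow_le_rpow_of_exponent_le (hσ1 Q hQ) (by norm_num)
      _ = avg σ Q := ENNReal.rpow_one _
  -- per-term bound
  have hterm : ∀ Q' : {Q' : Set (Fin n → ℝ) // Q' ∈ S ∧ Q' ⊆ Q ∧
      avg σ Q' ≤ (avg σ Q) ^ ((2:ℝ)⁻¹) ∧ avg w Q' * (avg σ Q') ^ (p-1) ≤ A / ψ (avg σ Q)},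
      avg σ Q'.1 * mass w Q'.1 ≤ K * X * volume Q'.1 := by
    rintro ⟨Q', hQ'S, hsub, hhalf, hA0⟩
    obtain ⟨k, m, hQ'eq⟩ := hdy Q' hQ'S
    have hvol : volume Q' ≠ 0 ∧ volume Q' ≠ ∞ := hQ'eq ▸ vol_dyadic k m
    have hmass : mass w Q' = avg w Q' * volume Q' :=
      (ENNReal.div_mul_cancel hvol.1 hvol.2).symm
    have hKlt : K < ∞ := ENNReal.div_lt_top hA.ne (hψpos _).ne'
    by_cases hfin : avg σ Q' = ∞
    · -- then avg w Q' = 0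
      have hwz : avg w Q' = 0 := by
        by_contra hne
        have : avg w Q' * (avg σ Q') ^ (p-1) = ∞ := by
          rw [hfin, ENNReal.top_rpow_of_pos (by linarith), ENNReal.mul_top hne]
        exact (hKlt.ne) (top_le_iff.1 (this ▸ hA0))
      simp [hmass, hwz]
    · have hne0 : avg σ Q' ≠ 0 := (lt_of_lt_of_le zero_lt_one (hσ1 Q' hQ'S)).ne'
      have hsplit : (avg σ Q') ^ (p-1) * (avg σ Q') ^ (2-p) = avg σ Q' := by
        rw [← ENNReal.rpow_add _ _ hne0 hfin]
        norm_num
      have key : avg w Q' * (avg σ Q') ^ (p-1) * (avg σ Q') ^ (2-p) = avg σ Q' * avg w Q' := by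
        rw [mul_assoc, hsplit, mul_comm]
      calc avg σ Q' * mass w Q'
          = (avg w Q' * (avg σ Q') ^ (p-1)) * ((avg σ Q') ^ (2-p)) * volume Q' := by
            rw [hmass, ← mul_assoc, ← key]
        _ ≤ K * X * volume Q' := by
            exact mul_le_mul' (mul_le_mul' hA0 (hXle Q' hhalf)) le_rfl
  -- volume sum bound
  have hd : Pairwise (Function.onFun Disjoint fun i : {Q' : Set (Fin n → ℝ) // Q' ∈ S ∧ Q' ⊆ Q ∧
      avg σ Q' ≤ (avg σ Q) ^ ((2:ℝ)⁻¹) ∧ avg w Q' * (avg σ Q') ^ (p-1) ≤ A / ψ (avg σ Q)}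
      => E i.1) := by
    intro i j hij
    exact hdisj i.2.1 j.2.1 (fun h => hij (Subtype.ext h))
  haveI := hsubcount
  have hvolsum : ∑' Q' : {Q' : Set (Fin n → ℝ) // Q' ∈ S ∧ Q' ⊆ Q ∧
      avg σ Q' ≤ (avg σ Q) ^ ((2:ℝ)⁻¹) ∧ avg w Q' * (avg σ Q') ^ (p-1) ≤ A / ψ (avg σ Q)},
      volume Q'.1 ≤ eta⁻¹ * volume Q :=
    vol_sum_aux heta0.ne' hetane Q (fun i : {Q' : Set (Fin n → ℝ) // Q' ∈ S ∧ Q' ⊆ Q ∧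
        avg σ Q' ≤ (avg σ Q) ^ ((2:ℝ)⁻¹) ∧ avg w Q' * (avg σ Q') ^ (p-1) ≤ A / ψ (avg σ Q)} => i.1) E
      (fun i => (hE i.1 i.2.1).2.1) (fun i => (hE i.1 i.2.1).2.2)
      (fun i => ((hE i.1 i.2.1).1).trans i.2.2.1) hd
  calc ∑' Q' : {Q' : Set (Fin n → ℝ) // Q' ∈ S ∧ Q' ⊆ Q ∧
          avg σ Q' ≤ (avg σ Q) ^ ((2:ℝ)⁻¹) ∧ avg w Q' * (avg σ Q') ^ (p-1) ≤ A / ψ (avg σ Q)},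
        avg σ Q'.1 * mass w Q'.1
      ≤ ∑' Q' : {Q' : Set (Fin n → ℝ) // Q' ∈ S ∧ Q' ⊆ Q ∧
          avg σ Q' ≤ (avg σ Q) ^ ((2:ℝ)⁻¹) ∧ avg w Q' * (avg σ Q') ^ (p-1) ≤ A / ψ (avg σ Q)},
        K * X * volume Q'.1 := ENNReal.tsum_le_tsum hterm
    _ = K * X * ∑' Q' : {Q' : Set (Fin n → ℝ) // Q' ∈ S ∧ Q' ⊆ Q ∧
          avg σ Q' ≤ (avg σ Q) ^ ((2:ℝ)⁻¹) ∧ avg w Q' * (avg σ Q') ^ (p-1) ≤ A / ψ (avg σ Q)},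
        volume Q'.1 := ENNReal.tsum_mul_left
    _ ≤ K * X * (eta⁻¹ * volume Q) := mul_le_mul_right hvolsum _
    _ = eta⁻¹ * K * X * volume Q := by ring
end
end
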